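/- Let E be a real inner product space, ρ > 0 and t ∈ E. Then the unique minimizer of z ↦ (1/2)‖z − t‖² + ρ‖z‖ over E is 0 if ‖t‖ ≤ ρ, and (1 − ρ/‖t‖)·t if ‖t‖ > ρ. -/

import Mathlib

noncomputable section

/-- **Block (ℓ¹-ℓ²) soft-thresholding is the proximal operator of `ρ‖·‖`.**
In a real inner product space, for `ρ > 0` and `t`, the unique minimizer of
`z ↦ (1/2)‖z - t‖² + ρ‖z‖` is `0` if `‖t‖ ≤ ρ` and `(1 - ρ/‖t‖) • t` if `‖t‖ > ρ`. -/
theorem block_soft_thresholding_prox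
    {E : Type*} [NormedAddCommGroup E] [InnerProductSpace ℝ E]
    (ρ : ℝ) (hρ : 0 < ρ) (t : E) :
    ∀ z : E, z ≠ (if ‖t‖ ≤ ρ then (0 : E) else (1 - ρ / ‖t‖) • t) →
      (1 / 2) * ‖(if ‖t‖ ≤ ρ then (0 : E) else (1 - ρ / ‖t‖) • t) - t‖ ^ 2
          + ρ * ‖(if ‖t‖ ≤ ρ then (0 : E) else (1 - ρ / ‖t‖) • t)‖
        < (1 / 2) * ‖z - t‖ ^ 2 + ρ * ‖z‖ := by
  intro z hz
  by_cases hle : ‖t‖ ≤ ρ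
  · simp only [if_pos hle] at hz ⊢
    have hzpos : 0 < ‖z‖ := norm_pos_iff.mpr hz
    have hexp : ‖z - t‖ ^ 2 = ‖z‖ ^ 2 - 2 * inner ℝ z t + ‖t‖ ^ 2 :=
      norm_sub_sq_real z t
    have hcs : inner ℝ z t ≤ ‖z‖ * ‖t‖ := real_inner_le_norm z t
    simp only [zero_sub, norm_neg, norm_zero, mul_zero, add_zero]
    nlinarith [sq_nonneg ‖z‖, mul_le_mul_of_nonneg_left hle (le_of_lt hzpos)]
  · simp only [if_neg hle] at hz ⊢
    push_neg at hle
    set a := ‖t‖ with ha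
    have haρ : ρ < a := hle
    have ha0 : 0 < a := lt_trans hρ haρ
    have hc0 : 0 ≤ 1 - ρ / a := by
      rw [sub_nonneg, div_le_one ha0]; exact le_of_lt haρ
    -- norm of the minimizer
    have hn1 : ‖(1 - ρ / a) • t‖ = a - ρ := by
      rw [norm_smul, Real.norm_eq_abs, abs_of_nonneg hc0]
      field_simp
      exact ha.symm
    -- norm of minimizer minus t
    have hn2 : ‖(1 - ρ / a) • t - t‖ = ρ := by
      have : (1 - ρ / a) • t - t = (-(ρ / a)) • t := by
        rw [sub_smul, one_smul, neg_smul]; abel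
      rw [this, norm_smul, Real.norm_eq_abs, abs_neg,
        abs_of_nonneg (le_of_lt (div_pos hρ ha0))]
      field_simp
      exact ha.symm
    have hzd : 0 < ‖z - (1 - ρ / a) • t‖ := norm_pos_iff.mpr (sub_ne_zero.mpr hz)
    have hexp1 : ‖z - (1 - ρ / a) • t‖ ^ 2
        = ‖z‖ ^ 2 - 2 * ((1 - ρ / a) * inner ℝ z t) + (a - ρ) ^ 2 := by
      rw [norm_sub_sq_real, hn1, real_inner_smul_right]
    have hexp2 : ‖z - t‖ ^ 2 = ‖z‖ ^ 2 - 2 * inner ℝ z t + a ^ 2 :=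
      norm_sub_sq_real z t
    have hcs : inner ℝ z t ≤ ‖z‖ * a := real_inner_le_norm z t
    have hkey : a * ‖z - (1 - ρ / a) • t‖ ^ 2
        = a * ‖z‖ ^ 2 - 2 * (inner ℝ z t : ℝ) * (a - ρ) + a * (a - ρ) ^ 2 := by
      rw [hexp1]; field_simp
    have hpos : 0 < a * ‖z - (1 - ρ / a) • t‖ ^ 2 :=
      mul_pos ha0 (pow_pos hzd 2)
    rw [hn1, hn2, hexp2]
    nlinarith [mul_le_mul_of_nonneg_left hcs (le_of_lt hρ)]
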